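/- Let V be a finite type and let Φ be a non-negative, monotone, submodular function on finite subsets of V. For a target size k with 1 ≤ k ≤ |V|, let S⋆ be the set produced by the greedy algorithm that starts from the empty set and at each of k steps adds an element i maximizing the marginal gain Φ(S ∪ {i}) − Φ(S). Then Φ(S⋆) ≥ (1 − (1 − 1/k)^k) · max_{|S| = k} Φ(S) ≥ (1 − 1/e) · max_{|S| = k} Φ(S). -/

import Mathlib

lemma submodular_union_le_sum
    {V : Type*} [DecidableEq V]
    (Φ : Finset V → ℝ)
    (hmono : ∀ S S' : Finset V, S ⊆ S' → Φ S ≤ Φ S')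
    (hsub : ∀ S S' : Finset V, ∀ i : V, S ⊆ S' → i ∉ S' →
      Φ (insert i S') - Φ S' ≤ Φ (insert i S) - Φ S)
    (A : Finset V) : ∀ T : Finset V,
      Φ (A ∪ T) - Φ A ≤ ∑ i ∈ T, (Φ (insert i A) - Φ A) := by
  intro T
  induction T using Finset.induction_on with
  | empty => simp
  | insert _ _ ha ih =>
    rename_i a T
    rw [Finset.sum_insert ha]
    have hstep : Φ (A ∪ insert a T) - Φ (A ∪ T) ≤ Φ (insert a A) - Φ A := by
      by_cases haU : a ∈ A ∪ T
      · have : A ∪ insert a T = A ∪ T := by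
          ext x; simp only [Finset.mem_union, Finset.mem_insert]
          constructor
          · rintro (h | rfl | h)
            · exact Or.inl h
            · simpa using haU
            · exact Or.inr h
          · rintro (h | h)
            · exact Or.inl h
            · exact Or.inr (Or.inr h)
        rw [this]
        have := hmono A (insert a A) (Finset.subset_insert a A)
        linarith
      · rw [Finset.union_insert]
        exact hsub A (A ∪ T) a Finset.subset_union_left haU
    linarith

theorem greedy_submodular_guarantee
    {V : Type*} [Fintype V] [DecidableEq V]
    (Φ : Finset V → ℝ)
    (hnn : ∀ S : Finset V, 0 ≤ Φ S)
    (hmono : ∀ S S' : Finset V, S ⊆ S' → Φ S ≤ Φ S')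
    (hsub : ∀ S S' : Finset V, ∀ i : V, S ⊆ S' → i ∉ S' →
      Φ (insert i S') - Φ S' ≤ Φ (insert i S) - Φ S)
    (k : ℕ) (hk : 1 ≤ k) (hkcard : k ≤ Fintype.card V)
    (S : ℕ → Finset V) (h0 : S 0 = ∅)
    (hgreedy : ∀ j < k, ∃ i ∉ S j, S (j + 1) = insert i (S j) ∧
      ∀ i' : V, Φ (insert i' (S j)) - Φ (S j) ≤ Φ (insert i (S j)) - Φ (S j)) :
    ∀ T : Finset V, T.card = k →
      (1 - 1 / Real.exp 1) * Φ T ≤ (1 - (1 - 1 / (k : ℝ)) ^ k) * Φ T ∧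
      (1 - (1 - 1 / (k : ℝ)) ^ k) * Φ T ≤ Φ (S k) := by
  intro T hT
  set K : ℝ := (k : ℝ) with hKdef
  have hK1 : (1 : ℝ) ≤ K := by rw [hKdef]; exact_mod_cast hk
  have hKpos : (0 : ℝ) < K := by linarith
  have hq0 : (0 : ℝ) ≤ 1 - 1 / K := by
    have : 1 / K ≤ 1 := by
      rw [div_le_one hKpos]; exact hK1
    linarith
  -- per-step contraction
  have key : ∀ j < k, Φ T - Φ (S (j + 1)) ≤ (1 - 1 / K) * (Φ T - Φ (S j)) := by
    intro j hj
    obtain ⟨i, hi, hS1, hmax⟩ := hgreedy j hj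
    set g : ℝ := Φ (S (j + 1)) - Φ (S j) with hg
    have hsum := submodular_union_le_sum Φ hmono hsub (S j) T
    have hterm : ∀ x ∈ T, Φ (insert x (S j)) - Φ (S j) ≤ g := by
      intro x _
      rw [hg, hS1]
      exact hmax x
    have hsum2 : ∑ x ∈ T, (Φ (insert x (S j)) - Φ (S j)) ≤ K * g := by
      calc ∑ x ∈ T, (Φ (insert x (S j)) - Φ (S j)) ≤ ∑ _x ∈ T, g :=
            Finset.sum_le_sum hterm
        _ = K * g := by rw [Finset.sum_const, hT, nsmul_eq_mul]
    have hTle : Φ T ≤ Φ (S j ∪ T) := hmono T _ Finset.subset_union_right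
    have h1 : Φ T - Φ (S j) ≤ K * g := by linarith
    have h2 : (1 - 1 / K) * (Φ T - Φ (S j)) - (Φ T - Φ (S (j + 1)))
        = (K * g - (Φ T - Φ (S j))) / K := by
      field_simp [hg]; ring
    have h3 : 0 ≤ (K * g - (Φ T - Φ (S j))) / K :=
      div_nonneg (by linarith) hKpos.le
    linarith
  -- induction
  have hdec : ∀ j ≤ k, Φ T - Φ (S j) ≤ (1 - 1 / K) ^ j * Φ T := by
    intro j hj
    induction j with
    | zero => simp [h0]; linarith [hnn (∅ : Finset V)]
    | succ n ih =>
      have hn : n < k := hj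
      have ih' := ih (le_of_lt hn)
      calc Φ T - Φ (S (n + 1)) ≤ (1 - 1 / K) * (Φ T - Φ (S n)) := key n hn
        _ ≤ (1 - 1 / K) * ((1 - 1 / K) ^ n * Φ T) :=
            mul_le_mul_of_nonneg_left ih' hq0
        _ = (1 - 1 / K) ^ (n + 1) * Φ T := by ring
  have hmain : (1 - (1 - 1 / K) ^ k) * Φ T ≤ Φ (S k) := by
    have := hdec k le_rfl
    nlinarith [this]
  refine ⟨?_, hmain⟩
  -- (1 - 1/K)^k ≤ 1/e
  have hexp1 : 1 - 1 / K ≤ Real.exp (-(1 / K)) := by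
    have := Real.add_one_le_exp (-(1 / K))
    linarith
  have hexp : (1 - 1 / K) ^ k ≤ Real.exp (-(1 / K)) ^ k :=
    pow_le_pow_left₀ hq0 hexp1 k
  have hKne : K ≠ 0 := ne_of_gt hKpos
  have heq : Real.exp (-(1 / K)) ^ k = Real.exp (-1) := by
    rw [← Real.exp_nat_mul]
    congr 1
    rw [hKdef]
    field_simp
  rw [heq, Real.exp_neg, ← one_div] at hexp
  have : 1 - 1 / Real.exp 1 ≤ 1 - (1 - 1 / K) ^ k := by linarith
  exact mul_le_mul_of_nonneg_right this (hnn T)
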